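/- For every non-negative integer m, the normalized integral of an odd power of sine admits the cosine expansion T_m(x) = 1/2 − (1/(2a_m)) Σ_{j=0}^{m} a_{m,j} cos((2j+1)πx) for x ∈ [0,1], where a_{m,j} = (−1)^{m−j} C(2m+1, m−j)/(2j+1) and a_m = Σ_{j=0}^m a_{m,j}. -/

import Mathlib

open Real Finset

lemma pascal_sum (N n : ℕ) (f : ℕ → ℝ) :
    ∑ i ∈ range (n+1), (-1:ℝ)^i * ((N+1).choose i : ℝ) * f i
    = ∑ i ∈ range (n+1), (-1:ℝ)^i * (N.choose i : ℝ) * f i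
      - ∑ i ∈ range n, (-1:ℝ)^i * (N.choose i : ℝ) * f (i+1) := by
  rw [Finset.sum_range_succ' (fun i => (-1:ℝ)^i * ((N+1).choose i : ℝ) * f i)]
  rw [Finset.sum_range_succ' (fun i => (-1:ℝ)^i * (N.choose i : ℝ) * f i)]
  simp only [Nat.choose_succ_succ, Nat.cast_add, pow_succ, Nat.succ_eq_add_one]
  ring_nf
  rw [Finset.sum_sub_distrib, Finset.sum_neg_distrib, Finset.sum_neg_distrib]
  simp only [Nat.choose_zero_right, Nat.cast_one]
  ring

lemma triple_sum (N n : ℕ) (f : ℕ → ℝ) :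
    ∑ i ∈ range (n+2), (-1:ℝ)^i * ((N+2).choose i : ℝ) * f i
    = ∑ i ∈ range (n+2), (-1:ℝ)^i * (N.choose i : ℝ) * f i
      - 2 * ∑ i ∈ range (n+1), (-1:ℝ)^i * (N.choose i : ℝ) * f (i+1)
      + ∑ i ∈ range n, (-1:ℝ)^i * (N.choose i : ℝ) * f (i+2) := by
  have h1 := pascal_sum (N+1) (n+1) f
  have h2 := pascal_sum N (n+1) f
  have h3 := pascal_sum N n (fun i => f (i+1))
  rw [h1, h2, h3]
  ring

lemma term_id (a θ : ℝ) : 2*Real.cos (2*θ)*Real.sin (a*θ) - 2*Real.sin (a*θ)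
    = Real.sin ((a+2)*θ) - 2*Real.sin (a*θ) + Real.sin ((a-2)*θ) := by
  have h1 : (a+2)*θ = a*θ + 2*θ := by ring
  have h2 : (a-2)*θ = a*θ - 2*θ := by ring
  rw [h1, h2, Real.sin_add, Real.sin_sub]
  ring

lemma key (m : ℕ) (θ : ℝ) :
    (-4:ℝ)^m * Real.sin θ ^ (2*m+1)
    = ∑ i ∈ range (m+1), (-1:ℝ)^i * ((2*m+1).choose i : ℝ)
        * Real.sin ((((2*m+1:ℕ):ℝ) - 2*i) * θ) := by
  induction m with
  | zero => simp
  | succ m ih =>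
    have hsin : (-4:ℝ)^(m+1) * Real.sin θ ^ (2*(m+1)+1)
        = ((-4:ℝ)^m * Real.sin θ ^ (2*m+1)) * (2*Real.cos (2*θ) - 2) := by
      have hc : Real.cos (2*θ) = 1 - 2 * Real.sin θ ^ 2 := by
        rw [Real.cos_two_mul]
        nlinarith [Real.sin_sq_add_cos_sq θ]
      rw [hc]; ring
    set f : ℕ → ℝ := fun i => Real.sin ((((2*(m+1)+1:ℕ):ℝ) - 2*i) * θ) with hf
    have hchoose : (2*(m+1)+1) = (2*m+1) + 2 := by ring
    have hrhs : ∑ i ∈ range (m+1+1), (-1:ℝ)^i * ((2*(m+1)+1).choose i : ℝ)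
          * Real.sin ((((2*(m+1)+1:ℕ):ℝ) - 2*i) * θ)
        = ∑ i ∈ range (m+2), (-1:ℝ)^i * ((2*m+1).choose i : ℝ) * f i
          - 2 * ∑ i ∈ range (m+1), (-1:ℝ)^i * ((2*m+1).choose i : ℝ) * f (i+1)
          + ∑ i ∈ range m, (-1:ℝ)^i * ((2*m+1).choose i : ℝ) * f (i+2) := by
      rw [hchoose]
      exact triple_sum (2*m+1) m f
    rw [hrhs, hsin, ih, Finset.sum_mul]
    -- peel last term of first sum and add/subtract extra term in third sum
    rw [Finset.sum_range_succ (fun i => (-1:ℝ)^i * ((2*m+1).choose i : ℝ) * f i) (m+1)]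
    have hthird : ∑ i ∈ range m, (-1:ℝ)^i * ((2*m+1).choose i : ℝ) * f (i+2)
        = ∑ i ∈ range (m+1), (-1:ℝ)^i * ((2*m+1).choose i : ℝ) * f (i+2)
          - (-1:ℝ)^m * ((2*m+1).choose m : ℝ) * f (m+2) := by
      rw [Finset.sum_range_succ]; ring
    rw [hthird]
    have hfm1 : f (m+1) = Real.sin θ := by
      rw [hf]; push_cast; ring_nf
    have hfm2 : f (m+2) = -Real.sin θ := by
      rw [hf]; push_cast
      rw [show ((2:ℝ)*(↑m+1)+1 - 2*(↑m+2)) * θ = -θ by ring, Real.sin_neg]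
    have hcs : ((2*m+1).choose (m+1) : ℝ) = ((2*m+1).choose m : ℝ) := by
      rw [show (2*m+1).choose (m+1) = (2*m+1).choose m by
        rw [← Nat.choose_symm (by omega : m+1 ≤ 2*m+1)]
        congr 1; omega]
    have hterms : ∀ i ∈ range (m+1),
        (-1:ℝ)^i * ((2*m+1).choose i : ℝ) * Real.sin ((((2*m+1:ℕ):ℝ) - 2*i) * θ)
          * (2*Real.cos (2*θ) - 2)
        = (-1:ℝ)^i * ((2*m+1).choose i : ℝ) * (f i - 2 * f (i+1) + f (i+2)) := by
      intro i _
      have ha := term_id (((2*m+1:ℕ):ℝ) - 2*i) θ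
      have e1 : f i = Real.sin (((((2*m+1:ℕ):ℝ) - 2*i) + 2) * θ) := by
        rw [hf]; push_cast; ring_nf
      have e2 : f (i+1) = Real.sin ((((2*m+1:ℕ):ℝ) - 2*i) * θ) := by
        rw [hf]; push_cast; ring_nf
      have e3 : f (i+2) = Real.sin (((((2*m+1:ℕ):ℝ) - 2*i) - 2) * θ) := by
        rw [hf]; push_cast; ring_nf
      rw [e1, e2, e3]
      linear_combination ((-1:ℝ)^i * ((2*m+1).choose i : ℝ)) * ha
    rw [Finset.sum_congr rfl hterms]
    have hsplit : ∑ i ∈ range (m+1), (-1:ℝ)^i * ((2*m+1).choose i : ℝ)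
          * (f i - 2 * f (i+1) + f (i+2))
        = ∑ i ∈ range (m+1), (-1:ℝ)^i * ((2*m+1).choose i : ℝ) * f i
          - 2 * ∑ i ∈ range (m+1), (-1:ℝ)^i * ((2*m+1).choose i : ℝ) * f (i+1)
          + ∑ i ∈ range (m+1), (-1:ℝ)^i * ((2*m+1).choose i : ℝ) * f (i+2) := by
      rw [Finset.mul_sum, ← Finset.sum_sub_distrib, ← Finset.sum_add_distrib]
      exact Finset.sum_congr rfl fun i _ => by ring
    rw [hsplit, hfm1, hfm2, hcs]
    ring

noncomputable def trigT (m : ℕ) (x : ℝ) : ℝ :=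
  (∫ t in (0:ℝ)..x, Real.sin (π * t) ^ (2 * m + 1)) /
    (∫ t in (0:ℝ)..(1:ℝ), Real.sin (π * t) ^ (2 * m + 1))

noncomputable def trigCoeff (m j : ℕ) : ℝ :=
  (-1 : ℝ) ^ (m - j) * ((2 * m + 1).choose (m - j) : ℝ) / (2 * j + 1)

lemma sin_integral (k y : ℝ) (hk : k ≠ 0) :
    ∫ t in (0:ℝ)..y, Real.sin (k*t) = (1 - Real.cos (k*y))/k := by
  rw [intervalIntegral.integral_comp_mul_left Real.sin hk]
  rw [integral_sin]
  simp [mul_comm]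
  field_simp

lemma hint (m : ℕ) (y : ℝ) :
    (∫ t in (0:ℝ)..y, Real.sin (π * t) ^ (2 * m + 1))
    = ((-4:ℝ)^m)⁻¹ * ∑ i ∈ range (m+1), (-1:ℝ)^i * ((2*m+1).choose i : ℝ)
        * ((1 - Real.cos ((((2*m+1:ℕ):ℝ) - 2*i) * π * y)) / ((((2*m+1:ℕ):ℝ) - 2*i) * π)) := by
  have h4 : ((-4:ℝ)^m) ≠ 0 := pow_ne_zero _ (by norm_num)
  have ha : ∀ i, i ∈ range (m+1) → (0:ℝ) < ((2*m+1:ℕ):ℝ) - 2*i := by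
    intro i hi
    have : (i:ℝ) ≤ m := by exact_mod_cast Nat.lt_succ_iff.mp (mem_range.mp hi)
    push_cast; linarith
  have hfun : (fun t => Real.sin (π * t) ^ (2 * m + 1))
      = fun t => ((-4:ℝ)^m)⁻¹ * ∑ i ∈ range (m+1), (-1:ℝ)^i * ((2*m+1).choose i : ℝ)
          * Real.sin (((((2*m+1:ℕ):ℝ) - 2*i) * π) * t) := by
    funext t
    have hk := key m (π * t)
    have : ∑ i ∈ range (m+1), (-1:ℝ)^i * ((2*m+1).choose i : ℝ)
          * Real.sin (((((2*m+1:ℕ):ℝ) - 2*i) * π) * t)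
        = ∑ i ∈ range (m+1), (-1:ℝ)^i * ((2*m+1).choose i : ℝ)
          * Real.sin ((((2*m+1:ℕ):ℝ) - 2*i) * (π * t)) := by
      exact Finset.sum_congr rfl fun i _ => by rw [mul_assoc _ π t]
    rw [this, ← hk, inv_mul_cancel_left₀ h4]
  rw [hfun, intervalIntegral.integral_const_mul]
  congr 1
  rw [intervalIntegral.integral_finset_sum]
  · apply Finset.sum_congr rfl
    intro i hi
    rw [intervalIntegral.integral_const_mul]
    have hki : ((((2*m+1:ℕ):ℝ) - 2*i) * π) ≠ 0 :=
      mul_ne_zero (ne_of_gt (ha i hi)) pi_ne_zero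
    rw [sin_integral _ _ hki]
  · intro i hi
    apply Continuous.intervalIntegrable
    fun_prop

lemma aux_term (c a p co : ℝ) (ha : a ≠ 0) (hp : p ≠ 0) :
    c * ((1 - co)/(a*p)) = (c/a - c/a*co)/p := by
  field_simp

lemma aux_term2 (c a p : ℝ) (ha : a ≠ 0) (hp : p ≠ 0) :
    c * ((1 - (-1:ℝ))/(a*p)) = 2*(c/a)/p := by
  field_simp
  ring

lemma aux_final (K p A B : ℝ) (hK : K ≠ 0) (hp : p ≠ 0) (hA : A ≠ 0) :
    K*((A-B)/p) / (K*(2*A/p)) = 1/2 - 1/(2*A)*B := by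
  rw [div_eq_iff (by simp [hK, hp, hA] : K*(2*A/p) ≠ 0)]
  field_simp

lemma denom_pos (m : ℕ) : 0 < ∫ t in (0:ℝ)..1, Real.sin (π * t) ^ (2 * m + 1) := by
  have h := integral_sin_pow_pos (2*m+1)
  have : ∫ t in (0:ℝ)..1, Real.sin (π * t) ^ (2 * m + 1)
      = π⁻¹ • ∫ u in (π*0)..(π*1), Real.sin u ^ (2*m+1) := by
    rw [← intervalIntegral.integral_comp_mul_left (fun u => Real.sin u ^ (2*m+1)) pi_ne_zero]
  rw [this]
  simp only [mul_zero, mul_one, smul_eq_mul]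
  exact mul_pos (inv_pos.mpr pi_pos) h

lemma reflect_sum (m : ℕ) (g : ℕ → ℝ) :
    ∑ j ∈ range (m+1), trigCoeff m j * g j
    = ∑ i ∈ range (m+1), ((-1:ℝ)^i * ((2*m+1).choose i : ℝ) / (2*(m-i:ℕ)+1)) * g (m-i) := by
  rw [← Finset.sum_range_reflect (fun i => ((-1:ℝ)^i * ((2*m+1).choose i : ℝ) / (2*(m-i:ℕ)+1)) * g (m-i)) (m+1)]
  apply Finset.sum_congr rfl
  intro j hj
  have hj' : j ≤ m := Nat.lt_succ_iff.mp (mem_range.mp hj)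
  have e1 : m + 1 - 1 - j = m - j := by omega
  have e2 : m - (m - j) = j := by omega
  rw [e1, e2, trigCoeff]

theorem trigT_cosine_expansion (m : ℕ) :
    ∀ x ∈ Set.Icc (0:ℝ) 1,
      trigT m x = 1 / 2 - (1 / (2 * ∑ j ∈ Finset.range (m + 1), trigCoeff m j)) *
        ∑ j ∈ Finset.range (m + 1),
          trigCoeff m j * Real.cos ((2 * j + 1) * π * x) := by
  intro x _
  have h4 : ((-4:ℝ)^m) ≠ 0 := pow_ne_zero _ (by norm_num)
  have ha : ∀ i, i ∈ range (m+1) → (0:ℝ) < ((2*m+1:ℕ):ℝ) - 2*i := by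
    intro i hi
    have : (i:ℝ) ≤ m := by exact_mod_cast Nat.lt_succ_iff.mp (mem_range.mp hi)
    push_cast; linarith
  -- closed forms
  set A := ∑ i ∈ range (m+1),
      (-1:ℝ)^i * ((2*m+1).choose i : ℝ) / (((2*m+1:ℕ):ℝ) - 2*i) with hA
  set B := ∑ i ∈ range (m+1),
      ((-1:ℝ)^i * ((2*m+1).choose i : ℝ) / (((2*m+1:ℕ):ℝ) - 2*i))
        * Real.cos ((((2*m+1:ℕ):ℝ) - 2*i) * π * x) with hB
  have hcos1 : ∀ i ∈ range (m+1),
      Real.cos ((((2*m+1:ℕ):ℝ) - 2*i) * π * 1) = -1 := by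
    intro i hi
    have hi' : i ≤ m := Nat.lt_succ_iff.mp (mem_range.mp hi)
    have e : (((2*m+1:ℕ):ℝ) - 2*i) * π * 1 = π + (((m:ℤ) - i : ℤ) : ℝ) * (2*π) := by
      push_cast; ring
    rw [e, Real.cos_add_int_mul_two_pi, Real.cos_pi]
  -- numerator
  have hnum : (∫ t in (0:ℝ)..x, Real.sin (π * t) ^ (2 * m + 1))
      = ((-4:ℝ)^m)⁻¹ * ((A - B) / π) := by
    rw [hint m x]
    congr 1
    rw [hA, hB, ← Finset.sum_sub_distrib, Finset.sum_div]
    apply Finset.sum_congr rfl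
    intro i hi
    have h := ha i hi
    exact aux_term _ _ _ _ (ne_of_gt h) pi_ne_zero
  -- denominator
  have hden : (∫ t in (0:ℝ)..1, Real.sin (π * t) ^ (2 * m + 1))
      = ((-4:ℝ)^m)⁻¹ * (2 * A / π) := by
    rw [hint m 1]
    congr 1
    rw [hA, Finset.mul_sum, Finset.sum_div]
    apply Finset.sum_congr rfl
    intro i hi
    have h := ha i hi
    rw [hcos1 i hi]
    exact aux_term2 _ _ _ (ne_of_gt h) pi_ne_zero
  have hApos := denom_pos m
  rw [hden] at hApos
  have hAne : A ≠ 0 := by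
    intro h0
    rw [h0] at hApos
    simp at hApos
  have hAsum : ∑ j ∈ Finset.range (m + 1), trigCoeff m j = A := by
    have h := reflect_sum m (fun _ => (1:ℝ))
    simp only [mul_one] at h
    rw [h, hA]
    apply Finset.sum_congr rfl
    intro i hi
    have hi' : i ≤ m := Nat.lt_succ_iff.mp (mem_range.mp hi)
    congr 1
    push_cast [Nat.cast_sub hi']
    ring
  have hBsum : ∑ j ∈ Finset.range (m + 1),
        trigCoeff m j * Real.cos ((2 * j + 1) * π * x) = B := by
    have h := reflect_sum m (fun j => Real.cos ((2 * (j:ℝ) + 1) * π * x))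
    rw [h, hB]
    apply Finset.sum_congr rfl
    intro i hi
    have hi' : i ≤ m := Nat.lt_succ_iff.mp (mem_range.mp hi)
    have e1 : (2*((m-i:ℕ):ℝ)+1) = ((2*m+1:ℕ):ℝ) - 2*i := by
      push_cast [Nat.cast_sub hi']; ring
    rw [e1]
  rw [trigT, hnum, hden, hAsum, hBsum]
  exact aux_final _ _ _ _ (inv_ne_zero h4) pi_ne_zero hAne
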